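/- For λ > 0 and c ∈ ℝ, the minimum value of j(θ) = (1/2)(c - θ)² + λ|θ| over θ ∈ ℝ equals ρ_λ(c), where ρ_λ is Huber's cost function: ρ_λ(u) = u²/2 if |u| ≤ λ and ρ_λ(u) = λ|u| - λ²/2 if |u| > λ. -/
import Mathlib


noncomputable def softThresh (lam c : ℝ) : ℝ := Real.sign c * max (|c| - lam) 0

noncomputable def huber (lam u : ℝ) : ℝ :=
  if |u| ≤ lam then u^2/2 else lam * |u| - lam^2/2

lemma huber_lb (lam c θ : ℝ) (hlam : 0 < lam) :
    huber lam c ≤ (1/2) * (c - θ)^2 + lam * |θ| := by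
  unfold huber
  split_ifs with h
  · nlinarith [abs_nonneg θ, sq_nonneg θ, le_abs_self (c*θ), abs_mul c θ,
      mul_le_mul_of_nonneg_right h (abs_nonneg θ)]
  · push_neg at h
    have h1 : |c| - |θ| ≤ |c - θ| := abs_sub_abs_le_abs_sub c θ
    have h2 : (0:ℝ) ≤ (|c - θ| - lam)^2 := sq_nonneg _
    have h3 : |c - θ|^2 = (c - θ)^2 := sq_abs _
    nlinarith

lemma huber_eq (lam c : ℝ) (hlam : 0 < lam) :
    (1/2) * (c - softThresh lam c)^2 + lam * |softThresh lam c| = huber lam c := by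
  unfold softThresh huber
  rcases le_or_gt |c| lam with h | h
  · rw [if_pos h, max_eq_right (by linarith)]
    simp
    ring
  · rw [if_neg (not_le.mpr h), max_eq_left (by linarith)]
    rcases lt_trichotomy c 0 with hc | hc | hc
    · rw [Real.sign_of_neg hc, abs_of_neg hc] at *
      rw [abs_of_nonpos (by linarith)]
      ring
    · simp [hc] at h; linarith [abs_nonneg c, hlam, h]
    · rw [Real.sign_of_pos hc, abs_of_pos hc] at *
      rw [abs_of_nonneg (by linarith)]
      ring

theorem soft_min_value_is_huber (lam c : ℝ) (hlam : 0 < lam) :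
    IsLeast (Set.range fun θ : ℝ => (1/2) * (c - θ)^2 + lam * |θ|) (huber lam c) ∧
    (1/2) * (c - softThresh lam c)^2 + lam * |softThresh lam c| = huber lam c := by
  refine ⟨⟨⟨softThresh lam c, huber_eq lam c hlam⟩, ?_⟩, huber_eq lam c hlam⟩
  rintro x ⟨θ, rfl⟩
  exact huber_lb lam c θ hlam
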